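/- arXiv:1101.5690 — 3 statements merged into one kernel-verified Lean document; each statement's English description precedes it below -/
import Mathlib

section
/- Every automorphism of the real algebra of quaternions is inner: for any ℝ-algebra automorphism α of ℍ there exists a unit quaternion g with α(x) = g x g⁻¹ for all x. -/
set_option maxHeartbeats 1000000

open Quaternion

section Stmt5Aux

local notation "H" => Quaternion ℝ

private lemma stmt5_key (α : Quaternion ℝ ≃ₐ[ℝ] Quaternion ℝ) :
    ∃ g : Quaternion ℝ, g ≠ 0 ∧ ∀ x : Quaternion ℝ, g * x = α x * g := by
  set I : H := ⟨0,1,0,0⟩ with hIdef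
  set J : H := ⟨0,0,1,0⟩ with hJdef
  set K : H := ⟨0,0,0,1⟩ with hKdef
  have hI2 : I * I = -1 := by ext <;> simp only [Quaternion.re_mul, Quaternion.imI_mul, Quaternion.imJ_mul, Quaternion.imK_mul] <;> simp [hIdef]
  have hJ2 : J * J = -1 := by ext <;> simp only [Quaternion.re_mul, Quaternion.imI_mul, Quaternion.imJ_mul, Quaternion.imK_mul] <;> simp [hJdef]
  have hIJ : I * J = K := by ext <;> simp only [Quaternion.re_mul, Quaternion.imI_mul, Quaternion.imJ_mul, Quaternion.imK_mul] <;> simp [hIdef, hJdef, hKdef]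
  have hJI : J * I = -K := by ext <;> simp only [Quaternion.re_mul, Quaternion.imI_mul, Quaternion.imJ_mul, Quaternion.imK_mul, Quaternion.re_neg, Quaternion.imI_neg, Quaternion.imJ_neg, Quaternion.imK_neg] <;> simp [hIdef, hJdef, hKdef]
  set p : H := α I with hpdef
  set j' : H := α J with hjdef
  have hp2 : p * p = -1 := by rw [hpdef, ← map_mul, hI2, map_neg, map_one]
  have hj2 : j' * j' = -1 := by rw [hjdef, ← map_mul, hJ2, map_neg, map_one]
  have hanti : j' * p + p * j' = 0 := by
    rw [hjdef, hpdef, ← map_mul, ← map_mul, ← map_add, hIJ, hJI]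
    simp
  -- Step 1: find g₁ ≠ 0 with g₁ * I = p * g₁
  have key1 : ∀ a : H, (a - p * (a * I)) * I = p * (a - p * (a * I)) := by
    intro a
    have h1 : (a - p * (a * I)) * I = a * I - p * (a * (I * I)) := by noncomm_ring
    have h2 : p * (a - p * (a * I)) = p * a - (p * p) * (a * I) := by noncomm_ring
    rw [h1, h2, hI2, hp2]
    noncomm_ring
  obtain ⟨g₁, hg₁, hg₁I⟩ : ∃ g₁ : H, g₁ ≠ 0 ∧ g₁ * I = p * g₁ := by
    by_cases h : (1 : H) - p * (1 * I) = 0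
    · refine ⟨J - p * (J * I), ?_, key1 J⟩
      have hpI : p = -I := by
        have h' : p * I = 1 := by
          have h1 := sub_eq_zero.mp h
          rw [one_mul] at h1
          exact h1.symm
        have h2 : p * (I * I) = 1 * I := by rw [← mul_assoc, h']
        rw [hI2, one_mul, mul_neg_one] at h2
        rw [← h2, neg_neg]
      rw [hpI]
      intro hc
      have := congrArg QuaternionAlgebra.imJ hc
      simp only [Quaternion.imJ_sub, Quaternion.imJ_mul, Quaternion.re_neg, Quaternion.imI_neg, Quaternion.imJ_neg, Quaternion.imK_neg, Quaternion.re_mul, Quaternion.imI_mul, Quaternion.imK_mul] at this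
      rw [hJdef, hIdef] at this
      norm_num [Quaternion.imJ_mul] at this
    · exact ⟨1 - p * (1 * I), h, key1 1⟩
  have hg₁' : g₁ * g₁⁻¹ = 1 := mul_inv_cancel₀ hg₁
  obtain ⟨q, hgq⟩ : ∃ q : H, g₁ * q = j' * g₁ :=
    ⟨g₁⁻¹ * (j' * g₁), by rw [← mul_assoc, hg₁', one_mul]⟩
  have hq2 : q * q = -1 := by
    apply mul_left_cancel₀ hg₁
    calc g₁ * (q * q) = (g₁ * q) * q := by rw [mul_assoc]
      _ = (j' * g₁) * q := by rw [hgq]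
      _ = j' * (g₁ * q) := by rw [mul_assoc]
      _ = j' * (j' * g₁) := by rw [hgq]
      _ = (j' * j') * g₁ := by rw [mul_assoc]
      _ = g₁ * (-1) := by rw [hj2]; noncomm_ring
  have hqI : q * I + I * q = 0 := by
    apply mul_left_cancel₀ hg₁
    calc g₁ * (q * I + I * q) = (g₁ * q) * I + (g₁ * I) * q := by noncomm_ring
      _ = (j' * g₁) * I + (p * g₁) * q := by rw [hgq, hg₁I]
      _ = j' * (g₁ * I) + p * (g₁ * q) := by noncomm_ring
      _ = j' * (p * g₁) + p * (j' * g₁) := by rw [hg₁I, hgq]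
      _ = (j' * p + p * j') * g₁ := by noncomm_ring
      _ = g₁ * 0 := by rw [hanti, zero_mul, mul_zero]
  -- component facts about q
  have hqre : q.re = 0 := by
    have := congrArg QuaternionAlgebra.imI hqI
    simp only [Quaternion.re_add, Quaternion.imI_add, Quaternion.imJ_add, Quaternion.imK_add, Quaternion.re_sub, Quaternion.imI_sub, Quaternion.imJ_sub, Quaternion.imK_sub, Quaternion.re_neg, Quaternion.imI_neg, Quaternion.imJ_neg, Quaternion.imK_neg, Quaternion.re_mul, Quaternion.imI_mul, Quaternion.imJ_mul, Quaternion.imK_mul] at this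
    simp [hIdef, Quaternion.imI_mul] at this
    linarith
  have hqimI : q.imI = 0 := by
    have := congrArg QuaternionAlgebra.re hqI
    simp only [Quaternion.re_add, Quaternion.imI_add, Quaternion.imJ_add, Quaternion.imK_add, Quaternion.re_sub, Quaternion.imI_sub, Quaternion.imJ_sub, Quaternion.imK_sub, Quaternion.re_neg, Quaternion.imI_neg, Quaternion.imJ_neg, Quaternion.imK_neg, Quaternion.re_mul, Quaternion.imI_mul, Quaternion.imJ_mul, Quaternion.imK_mul] at this
    simp [hIdef, Quaternion.re_mul] at this
    linarith
  set y : ℝ := q.imJ with hydef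
  set z : ℝ := q.imK with hzdef
  have hyz : y ^ 2 + z ^ 2 = 1 := by
    have := congrArg QuaternionAlgebra.re hq2
    simp [Quaternion.re_mul, hqre, hqimI] at this
    nlinarith
  -- Step 2: find g₂ ≠ 0 commuting with I with g₂ * J = q * g₂
  obtain ⟨g₂, hg₂, hg₂I, hg₂J⟩ :
      ∃ g₂ : H, g₂ ≠ 0 ∧ g₂ * I = I * g₂ ∧ g₂ * J = q * g₂ := by
    have hqe : q = ⟨0, 0, y, z⟩ := by
      ext <;> simp [hqre, hqimI, hydef, hzdef]
    by_cases hy : y = -1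
    · have hz : z = 0 := by
        have h1 : z ^ 2 = 0 := by nlinarith [hyz]
        exact pow_eq_zero_iff two_ne_zero |>.mp h1
      refine ⟨I, ?_, rfl, ?_⟩
      · intro hc
        rw [hIdef] at hc
        have := congrArg QuaternionAlgebra.imI hc
        norm_num at this
      · apply Quaternion.ext <;> simp only [Quaternion.re_add, Quaternion.imI_add, Quaternion.imJ_add, Quaternion.imK_add, Quaternion.re_sub, Quaternion.imI_sub, Quaternion.imJ_sub, Quaternion.imK_sub, Quaternion.re_neg, Quaternion.imI_neg, Quaternion.imJ_neg, Quaternion.imK_neg, Quaternion.re_mul, Quaternion.imI_mul, Quaternion.imJ_mul, Quaternion.imK_mul] <;> simp [hqe, hy, hz, hIdef, hJdef]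
    · have hyge : -1 ≤ y := by nlinarith
      have hypos : 0 < 1 + y := by
        rcases lt_or_eq_of_le hyge with h | h
        · linarith
        · exact absurd h.symm hy
      set a : ℝ := Real.sqrt ((1 + y) / 2) with hadef
      have ha2 : a ^ 2 = (1 + y) / 2 := Real.sq_sqrt (by linarith)
      have hapos : 0 < a := Real.sqrt_pos.mpr (by linarith)
      set b : ℝ := z / (2 * a) with hbdef
      have hab : 2 * a * b = z := by
        rw [hbdef]; field_simp
      refine ⟨⟨a, b, 0, 0⟩, ?_, ?_, ?_⟩
      · intro hc
        have := congrArg QuaternionAlgebra.re hc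
        simp at this
        exact absurd this (ne_of_gt hapos)
      · set g₀ : H := ⟨a, b, 0, 0⟩ with hg₀
        apply Quaternion.ext <;> simp only [Quaternion.re_add, Quaternion.imI_add, Quaternion.imJ_add, Quaternion.imK_add, Quaternion.re_sub, Quaternion.imI_sub, Quaternion.imJ_sub, Quaternion.imK_sub, Quaternion.re_neg, Quaternion.imI_neg, Quaternion.imJ_neg, Quaternion.imK_neg, Quaternion.re_mul, Quaternion.imI_mul, Quaternion.imJ_mul, Quaternion.imK_mul] <;> simp [hg₀, hIdef, Quaternion.re_mul, Quaternion.imI_mul,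
          Quaternion.imJ_mul, Quaternion.imK_mul]
      · rw [hqe]
        set g₀ : H := ⟨a, b, 0, 0⟩ with hg₀
        set q₀ : H := ⟨0, 0, y, z⟩ with hq₀
        apply Quaternion.ext <;> simp only [Quaternion.re_add, Quaternion.imI_add, Quaternion.imJ_add, Quaternion.imK_add, Quaternion.re_sub, Quaternion.imI_sub, Quaternion.imJ_sub, Quaternion.imK_sub, Quaternion.re_neg, Quaternion.imI_neg, Quaternion.imJ_neg, Quaternion.imK_neg, Quaternion.re_mul, Quaternion.imI_mul, Quaternion.imJ_mul, Quaternion.imK_mul] <;> simp [hg₀, hq₀, hJdef, Quaternion.re_mul, Quaternion.imI_mul,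
          Quaternion.imJ_mul, Quaternion.imK_mul]
        · have e : (a - (y * a + z * b)) * (2 * a) = 0 := by
            linear_combination (2 - 2 * y) * ha2 - z * hab - hyz
          have h0 : a - (y * a + z * b) = 0 := by
            rcases mul_eq_zero.mp e with h | h
            · exact h
            · linarith
          linarith
        · have e : (b - (z * a - y * b)) * (2 * a) = 0 := by
            linear_combination (1 + y) * hab - 2 * z * ha2
          have h0 : b - (z * a - y * b) = 0 := by
            rcases mul_eq_zero.mp e with h | h
            · exact h
            · linarith
          linarith
  -- combine
  refine ⟨g₁ * g₂, mul_ne_zero hg₁ hg₂, ?_⟩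
  have hgI : (g₁ * g₂) * I = α I * (g₁ * g₂) := by
    rw [mul_assoc, hg₂I, ← mul_assoc, hg₁I, ← hpdef, mul_assoc]
  have hgJ : (g₁ * g₂) * J = α J * (g₁ * g₂) := by
    rw [mul_assoc, hg₂J, ← mul_assoc, hgq, ← hjdef, mul_assoc]
  have hgK : (g₁ * g₂) * K = α K * (g₁ * g₂) := by
    rw [← hIJ, ← mul_assoc, hgI, mul_assoc, hgJ, map_mul, mul_assoc]
  intro x
  have hx : x = (x.re : H) + x.imI • I + x.imJ • J + x.imK • K := by
    apply Quaternion.ext <;> simp only [Quaternion.re_add, Quaternion.imI_add, Quaternion.imJ_add, Quaternion.imK_add, Quaternion.re_smul, Quaternion.imI_smul, Quaternion.imJ_smul, Quaternion.imK_smul, Quaternion.re_coe, Quaternion.imI_coe, Quaternion.imJ_coe, Quaternion.imK_coe] <;> simp [hIdef, hJdef, hKdef]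
  have hcoe : ∀ r : ℝ, α (r : H) = (r : H) := by
    intro r
    rw [← Quaternion.algebraMap_def, AlgEquiv.commutes]
  conv_lhs => rw [hx]
  conv_rhs => rw [hx]
  simp only [map_add, map_smul, hcoe, mul_add, add_mul, mul_smul_comm, smul_mul_assoc,
    hgI, hgJ, hgK]
  rw [← Quaternion.coe_commutes]

end Stmt5Aux

/-- Every ℝ-algebra automorphism of the quaternions is inner, implemented by
conjugation by a unit quaternion. -/
theorem stmt_5 (α : Quaternion ℝ ≃ₐ[ℝ] Quaternion ℝ) :
    ∃ g : Quaternion ℝ, ‖g‖ = 1 ∧ ∀ x : Quaternion ℝ, α x = g * x * g⁻¹ := by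
  obtain ⟨g, hg, key⟩ := stmt5_key α
  set c : ℝ := ‖g‖⁻¹ with hcdef
  have hgnorm : ‖g‖ ≠ 0 := norm_ne_zero_iff.2 hg
  have hc : c ≠ 0 := inv_ne_zero hgnorm
  refine ⟨c • g, ?_, ?_⟩
  · rw [norm_smul, hcdef]
    simp [abs_of_nonneg (inv_nonneg.2 (norm_nonneg g)), inv_mul_cancel₀ hgnorm]
  · intro x
    have hinv : (c • g)⁻¹ = c⁻¹ • g⁻¹ := by
      apply inv_eq_of_mul_eq_one_right
      rw [smul_mul_smul_comm, mul_inv_cancel₀ hg, mul_inv_cancel₀ hc, one_smul]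
    rw [hinv, smul_mul_assoc, smul_mul_assoc, mul_smul_comm, smul_smul,
      mul_inv_cancel₀ hc, one_smul]
    have : α x * (g * g⁻¹) = g * x * g⁻¹ := by
      rw [← mul_assoc, ← key, mul_assoc]
    rw [mul_inv_cancel₀ hg, mul_one] at this
    rw [← this]
end

section
/- In a finite-dimensional formally real Jordan algebra, the bilinear form ⟨a,b⟩ = tr(L_{a∘b}), where L_c denotes Jordan multiplication by c, is a positive definite inner product. -/
open Polynomial LinearMap

section JordanAux
variable {A : Type*} [AddCommGroup A] [Module ℝ A]
variable (mul : A →ₗ[ℝ] A →ₗ[ℝ] A)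

lemma jordan_lin (h_comm : ∀ a b : A, mul a b = mul b a)
    (h_jordan : ∀ a b : A, mul (mul (mul a a) b) a = mul (mul a a) (mul b a))
    (a c b : A) :
    mul (mul (mul a a) b) c + (2:ℝ) • mul (mul (mul a c) b) a
      = (2:ℝ) • mul (mul a c) (mul b a) + mul (mul a a) (mul b c) := by
  have h1 := h_jordan (a + c) b
  have h2 := h_jordan (a - c) b
  have h3 := h_jordan c b
  simp only [map_add, map_sub, LinearMap.add_apply, LinearMap.sub_apply] at h1 h2
  rw [h_comm c a] at h1 h2
  linear_combination (norm := module) (2⁻¹ : ℝ) • h1 - (2⁻¹ : ℝ) • h2 - h3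

variable (h_comm : ∀ a b : A, mul a b = mul b a)
    (h_jordan : ∀ a b : A, mul (mul (mul a a) b) a = mul (mul a a) (mul b a))

lemma pw_succ (a : A) (j : ℕ) : ((mul a) ^ (j+1)) a = mul a (((mul a) ^ j) a) := by
  rw [pow_succ']; rfl

lemma pw_zero (a : A) : ((mul a) ^ 0) a = a := rfl

include h_comm h_jordan in
lemma pa1 (a : A) : ∀ j, mul (((mul a)^1) a) (((mul a)^j) a) = ((mul a)^(j+2)) a := by
  have h1 : ((mul a)^1) a = mul a a := by rw [pw_succ, pw_zero]
  intro j
  induction j with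
  | zero =>
    rw [pw_zero, h1, h_comm, show (0+2) = (1+1) by omega, pw_succ, h1]
  | succ n ih =>
    have h2 : ((mul a)^(n+1)) a = mul (((mul a) ^ n) a) a := by
      rw [pw_succ, h_comm]
    rw [h1, h2, ← h_jordan a (((mul a) ^ n) a), ← h1, ih, h_comm,
      ← pw_succ, show (n+2+1) = (n+1+2) by omega]

include h_comm h_jordan in
lemma pa (a : A) : ∀ i j, mul (((mul a)^i) a) (((mul a)^j) a) = ((mul a)^(i+j+1)) a := by
  intro i
  induction i with
  | zero => intro j; rw [pw_zero, ← pw_succ, show (0+j+1) = (j+1) by omega]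
  | succ k ihk =>
    match k, ihk with
    | 0, _ =>
      intro j
      rw [pa1 mul h_comm h_jordan a j, show (0+1+j+1) = (j+2) by omega]
    | (n+1), ihk =>
      intro j
      induction j with
      | zero =>
        rw [pw_zero, h_comm, ← pw_succ, show (n+1+1+0+1) = (n+1+1+1) by omega]
      | succ m ihm =>
        have L := jordan_lin mul h_comm h_jordan a (((mul a)^(n+1)) a) (((mul a)^m) a)
        have hac : mul a (((mul a)^(n+1)) a) = ((mul a)^(n+2)) a := (pw_succ mul a (n+1)).symm
        have haa : mul a a = ((mul a)^1) a := (by rw [pw_succ, pw_zero] : ((mul a)^1) a = mul a a).symm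
        rw [hac, haa] at L
        rw [pa1 mul h_comm h_jordan a m] at L
        rw [h_comm (((mul a)^(m+2)) a) (((mul a)^(n+1)) a)] at L
        rw [ihk (m+2)] at L
        rw [h_comm (((mul a)^m) a) (((mul a)^(n+1)) a)] at L
        rw [ihk m] at L
        rw [pa1 mul h_comm h_jordan a (n+1+m+1)] at L
        rw [h_comm (((mul a)^m) a) a, ← pw_succ] at L
        rw [ihm, h_comm (((mul a)^(n+1+1+m+1)) a) a, ← pw_succ] at L
        rw [show (n+1+(m+2)+1) = (n+m+4) by omega, show (n+1+1+m+1+1) = (n+m+4) by omega,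
          show (n+1+m+1+2) = (n+m+4) by omega] at L
        rw [show (n+1+1+(m+1)+1) = (n+m+4) by omega]
        have key : (2:ℝ) • mul (((mul a)^(n+2)) a) (((mul a)^(m+1)) a)
            = (2:ℝ) • ((mul a)^(n+m+4)) a := by
          linear_combination (norm := module) -L
        have := smul_right_injective A (by norm_num : (2:ℝ) ≠ 0) key
        rwa [show (n+1+1) = (n+2) by omega]

lemma aeval_apply_monomial (b : A) (i : ℕ) (c : ℝ) :
    aeval (mul b) (monomial i c) b = c • ((mul b)^i) b := by
  rw [aeval_monomial, Algebra.algebraMap_eq_smul_one]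
  simp [Module.End.mul_apply, LinearMap.smul_apply]

include h_comm h_jordan in
lemma mulv (b : A) (q r : ℝ[X]) :
    mul (aeval (mul b) q b) (aeval (mul b) r b) = aeval (mul b) (X*q*r) b := by
  induction q using Polynomial.induction_on' with
  | add p s hp hs =>
    rw [show (X:ℝ[X])*(p+s)*r = X*p*r + X*s*r by ring]
    simp only [map_add, LinearMap.add_apply, hp, hs]
  | monomial i c =>
    induction r using Polynomial.induction_on' with
    | add p s hp hs =>
      rw [show (X:ℝ[X])*(monomial i c)*(p+s) = X*(monomial i c)*p + X*(monomial i c)*s by ring]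
      simp only [map_add, LinearMap.add_apply, hp, hs]
    | monomial j d =>
      rw [aeval_apply_monomial, aeval_apply_monomial,
        show (X : ℝ[X]) * monomial i c * monomial j d = monomial (i+j+1) (c*d) by
          rw [← monomial_one_one_eq_X, monomial_mul_monomial, monomial_mul_monomial, one_mul,
            show 1+i+j = i+j+1 by omega],
        aeval_apply_monomial]
      rw [map_smul, map_smul, LinearMap.smul_apply, pa mul h_comm h_jordan b i j, smul_smul, mul_comm d c]

lemma smul_aeval (b : A) (r : ℝ) (f : ℝ[X]) :
    r • aeval (mul b) f b = aeval (mul b) (C r * f) b := by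
  rw [map_mul, aeval_C, Module.End.mul_apply, Module.algebraMap_end_apply]

private noncomputable def q1 : ℝ[X] := X^3 + X^3 - (X^2 + X^2 + X^2) + X
private noncomputable def qQ : ℝ[X] := X^2 + X^2 - X
private noncomputable def qR : ℝ[X] := X + X + X + X - (X^2 + X^2 + X^2 + X^2)

lemma proj_pos [FiniteDimensional ℝ A] (P : Module.End ℝ A) (e : A) (hPe : P e = e)
    (hne : e ≠ 0) (rel : ∀ c, (2:ℝ) • P (P (P c)) + P c = (3:ℝ) • P (P c)) :
    0 < trace ℝ A P := by
  have h3 : ∀ c, (P^3) c = P (P (P c)) := fun c => rfl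
  have h2 : ∀ c, (P^2) c = P (P c) := fun c => rfl
  have cub : aeval P q1 = 0 := by
    apply LinearMap.ext; intro c
    simp only [q1, map_sub, map_add, map_pow, aeval_X,
      LinearMap.sub_apply, LinearMap.add_apply, LinearMap.zero_apply, h3, h2]
    linear_combination (norm := module) rel c
  have hQ : aeval P qQ ∘ₗ aeval P qQ = aeval P qQ := by
    have h0 : aeval P qQ * aeval P qQ - aeval P qQ = 0 := by
      rw [← map_mul, ← map_sub, show qQ * qQ - qQ = q1 * (2*X + 1) by unfold qQ q1; ring,
        map_mul, cub, zero_mul]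
    exact sub_eq_zero.mp h0
  have hR : aeval P qR ∘ₗ aeval P qR = aeval P qR := by
    have h0 : aeval P qR * aeval P qR - aeval P qR = 0 := by
      rw [← map_mul, ← map_sub, show qR * qR - qR = q1 * (8*X - 4) by unfold qR q1; ring,
        map_mul, cub, zero_mul]
    exact sub_eq_zero.mp h0
  have hPQR : P + P = (aeval P qQ + aeval P qQ) + aeval P qR := by
    have h := congrArg (aeval P) (show (X + X : ℝ[X]) = (qQ + qQ) + qR by unfold qQ qR; ring)
    simpa only [map_add, aeval_X] using h
  obtain ⟨p, hp⟩ := (LinearMap.isProj_iff_isIdempotentElem _).mpr hQ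
  obtain ⟨r, hr⟩ := (LinearMap.isProj_iff_isIdempotentElem _).mpr hR
  have hQe : aeval P qQ e = e := by
    simp only [qQ, map_sub, map_add, map_pow, aeval_X, LinearMap.sub_apply,
      LinearMap.add_apply, h2, hPe]
    module
  have htrQ := hp.trace
  have htrR := hr.trace
  have hp1 : 1 ≤ Module.finrank ℝ p := by
    rcases Nat.eq_zero_or_pos (Module.finrank ℝ p) with h0 | h1
    · exfalso
      have hbot : p = ⊥ := Submodule.finrank_eq_zero.mp h0
      have hmem := hp.map_mem e
      rw [hQe, hbot, Submodule.mem_bot] at hmem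
      exact hne hmem
    · exact h1
  have htr := congrArg (trace ℝ A) hPQR
  simp only [map_add, htrQ, htrR] at htr
  have h1 : (0:ℝ) ≤ (Module.finrank ℝ r : ℝ) := Nat.cast_nonneg _
  have h2 : (1:ℝ) ≤ (Module.finrank ℝ p : ℝ) := by exact_mod_cast hp1
  linarith

include h_comm h_jordan in
lemma idem_trace [FiniteDimensional ℝ A] (e : A) (he : mul e e = e) (hne : e ≠ 0) :
    0 < trace ℝ A (mul e) := by
  apply proj_pos (mul e) e he hne
  intro c
  have L := jordan_lin mul h_comm h_jordan e c e
  rw [he, he, h_comm (mul e c) e, h_comm (mul e (mul e c)) e] at L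
  linear_combination (norm := module) L

end JordanAux

section Main
variable {A : Type*} [AddCommGroup A] [Module ℝ A]
variable (mul : A →ₗ[ℝ] A →ₗ[ℝ] A)
variable (h_comm : ∀ a b : A, mul a b = mul b a)
    (h_jordan : ∀ a b : A, mul (mul (mul a a) b) a = mul (mul a a) (mul b a))
    (h_fr : ∀ (k : ℕ) (s : Fin k → A), ∑ i, mul (s i) (s i) = 0 → ∀ i, s i = 0)

include h_fr in
lemma fr1 (x : A) (h : mul x x = 0) : x = 0 := by
  have := h_fr 1 ![x] (by simpa using h) 0
  simpa using this

include h_fr in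
lemma fr2 (x y : A) (h : mul x x + mul y y = 0) : x = 0 ∧ y = 0 := by
  have h0 := h_fr 2 ![x, y] (by simpa [Fin.sum_univ_two] using h)
  exact ⟨by simpa using h0 0, by simpa using h0 1⟩

include h_comm h_jordan in
lemma transfer (b : A) (m f g : ℝ[X])
    (hker : ∀ r : ℝ[X], aeval (mul b) (m * r) b = 0)
    (hf : f*f - f = m * g) :
    ∀ q : ℝ[X], aeval (mul (aeval (mul b) f b)) q (aeval (mul b) f b)
      = aeval (mul b) (f * q) b := by
  have hmono : ∀ k : ℕ, ((mul (aeval (mul b) f b))^k) (aeval (mul b) f b)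
      = aeval (mul b) (X^k * f) b := by
    intro k
    induction k with
    | zero => rw [pw_zero, pow_zero, one_mul]
    | succ k ih =>
      rw [pw_succ, ih, mulv mul h_comm h_jordan,
        show (X:ℝ[X]) * f * (X^k * f) = X^(k+1) * f + m * (X^(k+1) * g) by
          linear_combination (X^(k+1) : ℝ[X]) * hf,
        map_add, LinearMap.add_apply, hker, add_zero]
  intro q
  induction q using Polynomial.induction_on' with
  | add p s hp hs =>
    rw [show f * (p + s) = f * p + f * s by ring]
    simp only [map_add, LinearMap.add_apply, hp, hs]
  | monomial i c =>
    rw [aeval_apply_monomial, hmono i,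
      show f * monomial i c = C c * (X^i * f) by rw [← C_mul_X_pow_eq_monomial]; ring]
    exact smul_aeval mul b c _

include h_comm h_jordan h_fr in
lemma root_exists (b : A) (hb : b ≠ 0) (m : ℝ[X])
    (hmem : ∀ x : ℝ[X], aeval (mul b) x b = 0 ↔ m ∣ x)
    (hdeg : 1 ≤ m.natDegree) (hmonic : m.Monic) :
    ∃ l : ℝ, m.IsRoot l := by
  have hm0 : m ≠ 0 := hmonic.ne_zero
  have hdegC : 0 < (m.map (algebraMap ℝ ℂ)).degree := by
    rw [degree_map]
    exact natDegree_pos_iff_degree_pos.mp hdeg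
  obtain ⟨z, hz⟩ := Complex.exists_root hdegC
  have hz' : eval z (m.map (algebraMap ℝ ℂ)) = 0 := hz
  by_cases him : z.im = 0
  · refine ⟨z.re, ?_⟩
    have hzre : (algebraMap ℝ ℂ) z.re = z := by
      apply Complex.ext <;> simp [him]
    rw [eval_map, ← hzre, eval₂_at_apply] at hz'
    have : ((m.eval z.re : ℝ) : ℂ) = 0 := hz'
    exact_mod_cast this
  · exfalso
    have hconj : eval ((starRingEnd ℂ) z) (m.map (algebraMap ℝ ℂ)) = 0 := by
      have h1 := congrArg (starRingEnd ℂ) hz'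
      rw [eval_map, hom_eval₂, map_zero] at h1
      have h2 : (starRingEnd ℂ).comp (algebraMap ℝ ℂ) = algebraMap ℝ ℂ :=
        RingHom.ext fun r => Complex.conj_ofReal r
      rw [h2] at h1
      rw [eval_map]
      exact h1
    have hzne : z ≠ (starRingEnd ℂ) z := fun h =>
      him (Complex.conj_eq_iff_im.mp h.symm)
    have hcop : IsCoprime (X - C z) (X - C ((starRingEnd ℂ) z)) :=
      isCoprime_X_sub_C_of_isUnit_sub
        (isUnit_iff_ne_zero.mpr (sub_ne_zero.mpr hzne))
    have hdvd2 : (X - C z) * (X - C ((starRingEnd ℂ) z)) ∣ m.map (algebraMap ℝ ℂ) :=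
      hcop.mul_dvd (dvd_iff_isRoot.mpr hz) (dvd_iff_isRoot.mpr hconj)
    have hI2 : (C Complex.I : ℂ[X])^2 = -1 := by
      rw [← map_pow, Complex.I_sq, map_neg, map_one]
    have key : ∀ (al be : ℝ), ((X - C al)^2 + C (be^2) : ℝ[X]).map (algebraMap ℝ ℂ)
        = (X - C ((al:ℂ) + (be:ℂ)*Complex.I)) * (X - C ((al:ℂ) - (be:ℂ)*Complex.I)) := by
      intro al be
      rw [Polynomial.map_add, Polynomial.map_pow, Polynomial.map_sub, map_X, map_C, map_C,
        map_pow]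
      have h1 : (algebraMap ℝ ℂ) al = (al:ℂ) := rfl
      have h2 : (algebraMap ℝ ℂ) be = (be:ℂ) := rfl
      rw [h1, h2, map_add, map_sub, map_mul]
      linear_combination (norm := ring) (C ((be:ℂ)))^2 * hI2 + map_pow C ((be:ℂ)) 2
    have hz2 : (starRingEnd ℂ) z = (z.re:ℂ) - (z.im:ℂ) * Complex.I := by
      apply Complex.ext <;> simp
    have hq2map : ((X - C z.re)^2 + C (z.im^2) : ℝ[X]).map (algebraMap ℝ ℂ)
        = (X - C z) * (X - C ((starRingEnd ℂ) z)) := by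
      rw [key z.re z.im, Complex.re_add_im, ← hz2]
    have hq2dvd : ((X - C z.re)^2 + C (z.im^2) : ℝ[X]) ∣ m := by
      rw [← map_dvd_map' (algebraMap ℝ ℂ), hq2map]
      exact hdvd2
    obtain ⟨q3, hq3⟩ := hq2dvd
    have hq2deg : ((X - C z.re)^2 + C (z.im^2) : ℝ[X]).natDegree = 2 := by
      rw [natDegree_add_C, natDegree_pow, natDegree_X_sub_C]
    have hq30 : q3 ≠ 0 := by
      intro h; rw [h, mul_zero] at hq3; exact hm0 hq3
    have hq3deg : m.natDegree = 2 + q3.natDegree := by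
      rw [hq3, natDegree_mul (by intro h; rw [h, zero_mul] at hq3; exact hm0 hq3) hq30, hq2deg]
    have huu : aeval (mul b) q3 b ≠ 0 := by
      intro h
      have hdvd := (hmem q3).mp h
      have := natDegree_le_of_dvd hdvd hq30
      omega
    have hxx : mul (aeval (mul b) ((X - C z.re) * q3) b) (aeval (mul b) ((X - C z.re) * q3) b)
        + mul (z.im • aeval (mul b) q3 b) (z.im • aeval (mul b) q3 b) = 0 := by
      rw [mulv mul h_comm h_jordan, map_smul, map_smul, LinearMap.smul_apply, smul_smul,
        show z.im * z.im = z.im^2 by ring, mulv mul h_comm h_jordan,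
        smul_aeval, ← LinearMap.add_apply, ← map_add]
      have hpoly : (X:ℝ[X]) * ((X - C z.re) * q3) * ((X - C z.re) * q3)
          + C (z.im^2) * (X * q3 * q3) = m * (X * q3) := by
        rw [hq3]; ring
      rw [hpoly]
      exact (hmem _).mpr (dvd_mul_right m _)
    obtain ⟨_, hy⟩ := fr2 mul h_fr _ _ hxx
    rw [smul_eq_zero] at hy
    rcases hy with h | h
    · exact him h
    · exact huu h

include h_comm h_jordan h_fr in
lemma main_pos [FiniteDimensional ℝ A] :
    ∀ d : ℕ, ∀ b : A, b ≠ 0 → ∀ q : ℝ[X], q.Monic → q.natDegree ≤ d →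
      aeval (mul b) q b = 0 → 0 < trace ℝ A (mul (mul b b)) := by
  intro d
  induction d using Nat.strong_induction_on with
  | _ d IH =>
  intro b hb q hqmonic hqdeg hqann
  -- the annihilator ideal of b
  let I : Ideal ℝ[X] :=
    { carrier := {x | aeval (mul b) x b = 0}
      add_mem' := fun {p₁ p₂} hp₁ hp₂ => by
        simp only [Set.mem_setOf_eq, map_add, LinearMap.add_apply] at *
        rw [hp₁, hp₂, add_zero]
      zero_mem' := by simp
      smul_mem' := fun r x hx => by
        simp only [Set.mem_setOf_eq, smul_eq_mul, map_mul, Module.End.mul_apply] at *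
        rw [hx, map_zero] }
  have hIdef : ∀ x : ℝ[X], x ∈ I ↔ aeval (mul b) x b = 0 := fun _ => Iff.rfl
  haveI hIp : I.IsPrincipal := IsPrincipalIdealRing.principal I
  set g : ℝ[X] := Submodule.IsPrincipal.generator I with hgdef
  have hgq : g ∣ q := (Submodule.IsPrincipal.mem_iff_generator_dvd I).mp hqann
  have hg0 : g ≠ 0 := by
    intro h
    rw [h] at hgq
    exact hqmonic.ne_zero (zero_dvd_iff.mp hgq)
  set m : ℝ[X] := g * C (g.leadingCoeff)⁻¹ with hmdef
  have hmmonic : m.Monic := monic_mul_leadingCoeff_inv hg0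
  have hassoc : Associated g m := by
    refine associated_mul_unit_right g _ ?_
    exact Polynomial.isUnit_C.mpr
      (isUnit_iff_ne_zero.mpr (inv_ne_zero (leadingCoeff_ne_zero.mpr hg0)))
  have hmem : ∀ x : ℝ[X], aeval (mul b) x b = 0 ↔ m ∣ x := fun x =>
    ((hIdef x).symm.trans (Submodule.IsPrincipal.mem_iff_generator_dvd I)).trans
      (hassoc.dvd_iff_dvd_left)
  have hmann : aeval (mul b) m b = 0 := (hmem m).mpr dvd_rfl
  have hmdvdq : m ∣ q := (hmem q).mp hqann
  have hmdeg : m.natDegree ≤ d :=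
    le_trans (natDegree_le_of_dvd hmdvdq hqmonic.ne_zero) hqdeg
  have hmdegpos : 1 ≤ m.natDegree := by
    by_contra hcon
    push_neg at hcon
    have h1 : m = 1 := hmmonic.natDegree_eq_zero.mp (by omega)
    rw [h1, map_one, Module.End.one_apply] at hmann
    exact hb hmann
  obtain ⟨lam, hlam⟩ := root_exists mul h_comm h_jordan h_fr b hb m hmem hmdegpos hmmonic
  have hfac : (X - C lam) * (m / (X - C lam)) = m := mul_div_eq_iff_isRoot.mpr hlam
  set m2 : ℝ[X] := m / (X - C lam) with hm2def
  have hm2monic : m2.Monic :=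
    (monic_X_sub_C lam).of_mul_monic_left (by rw [hfac]; exact hmmonic)
  have hdeg_eq : m.natDegree = 1 + m2.natDegree := by
    rw [← hfac, natDegree_mul (X_sub_C_ne_zero lam) hm2monic.ne_zero, natDegree_X_sub_C]
  by_cases hm2one : m2.natDegree = 0
  · -- base case : m = X - C lam
    have hm2eq : m2 = 1 := hm2monic.natDegree_eq_zero.mp hm2one
    rw [hm2eq, mul_one] at hfac
    rw [← hfac, map_sub, LinearMap.sub_apply, aeval_X, aeval_C,
      Module.algebraMap_end_apply, sub_eq_zero] at hmann
    -- hmann : mul b b = lam • b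
    have hlam0 : lam ≠ 0 := by
      intro h
      rw [h, zero_smul] at hmann
      exact hb (fr1 mul h_fr b hmann)
    have he : mul (lam⁻¹ • b) (lam⁻¹ • b) = lam⁻¹ • b := by
      rw [map_smul, map_smul, LinearMap.smul_apply, hmann, smul_smul, smul_smul]
      congr 1
      field_simp
    have hne : lam⁻¹ • b ≠ 0 :=
      smul_ne_zero (inv_ne_zero hlam0) hb
    have hpos := idem_trace mul h_comm h_jordan (lam⁻¹ • b) he hne
    have hb_eq : b = lam • (lam⁻¹ • b) := by
      rw [smul_smul, mul_inv_cancel₀ hlam0, one_smul]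
    have hmm : mul (mul b b) = (lam * lam) • mul (lam⁻¹ • b) := by
      calc mul (mul b b) = lam • mul b := by rw [hmann, map_smul]
      _ = lam • mul (lam • (lam⁻¹ • b)) := by rw [← hb_eq]
      _ = (lam * lam) • mul (lam⁻¹ • b) := by rw [map_smul, smul_smul]
    rw [hmm, map_smul, smul_eq_mul]
    exact mul_pos (mul_self_pos.mpr hlam0) hpos
  · -- inductive case
    have hm2degpos : 1 ≤ m2.natDegree := by omega
    by_cases hco : IsCoprime (X - C lam) m2
    · obtain ⟨s, t, hst⟩ := hco
      set c : ℝ[X] := X - C lam with hcdef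
      set u : A := aeval (mul b) (t * m2) b with hudef
      set w : A := aeval (mul b) (s * c) b with hwdef
      have hker : ∀ r : ℝ[X], aeval (mul b) (m * r) b = 0 := fun r =>
        (hmem _).mpr (dvd_mul_right m r)
      have hsum : u + w = b := by
        rw [hudef, hwdef, ← LinearMap.add_apply, ← map_add,
          show t * m2 + s * c = 1 by linear_combination hst, map_one, Module.End.one_apply]
      have horth : mul u w = 0 := by
        rw [hudef, hwdef, mulv mul h_comm h_jordan,
          show (X:ℝ[X]) * (t * m2) * (s * c) = m * (X * t * s) by rw [← hfac]; ring]
        exact hker _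
      have hbb : mul b b = mul u u + mul w w := by
        rw [← hsum]
        simp only [map_add, LinearMap.add_apply]
        rw [horth, h_comm w u, horth]
        abel
      have hannu : aeval (mul u) c u = 0 := by
        rw [hudef, transfer mul h_comm h_jordan b m (t * m2) (-(t*s)) hker
          (by rw [← hfac]; linear_combination (t * m2) * hst) c,
          show (t * m2) * c = m * t by rw [← hfac]; ring]
        exact hker t
      have hannw : aeval (mul w) m2 w = 0 := by
        rw [hwdef, transfer mul h_comm h_jordan b m (s * c) (-(t*s)) hker
          (by rw [← hfac]; linear_combination (s * c) * hst) m2,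
          show (s * c) * m2 = m * s by rw [← hfac]; ring]
        exact hker s
      have htr : trace ℝ A (mul (mul b b))
          = trace ℝ A (mul (mul u u)) + trace ℝ A (mul (mul w w)) := by
        rw [hbb, map_add, map_add]
      have hu_nonneg : 0 ≤ trace ℝ A (mul (mul u u)) ∧
          (u ≠ 0 → 0 < trace ℝ A (mul (mul u u))) := by
        by_cases hu0 : u = 0
        · constructor
          · rw [hu0]; simp
          · intro h; exact absurd hu0 h
        · have := IH 1 (by omega) u hu0 c (monic_X_sub_C lam)
            (by rw [hcdef, natDegree_X_sub_C]) hannu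
          exact ⟨le_of_lt this, fun _ => this⟩
      have hw_nonneg : 0 ≤ trace ℝ A (mul (mul w w)) ∧
          (w ≠ 0 → 0 < trace ℝ A (mul (mul w w))) := by
        by_cases hw0 : w = 0
        · constructor
          · rw [hw0]; simp
          · intro h; exact absurd hw0 h
        · have := IH m2.natDegree (by omega) w hw0 m2 hm2monic le_rfl hannw
          exact ⟨le_of_lt this, fun _ => this⟩
      have hnotboth : u ≠ 0 ∨ w ≠ 0 := by
        by_contra hcon
        push_neg at hcon
        rw [hcon.1, hcon.2, add_zero] at hsum
        exact hb hsum.symm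
      rw [htr]
      rcases hnotboth with h | h
      · have := hu_nonneg.2 h
        linarith [hw_nonneg.1]
      · have := hw_nonneg.2 h
        linarith [hu_nonneg.1]
    · -- not coprime : contradiction with formal reality
      exfalso
      have hdvd : (X - C lam) ∣ m2 := by
        by_contra hnd
        exact hco ((irreducible_X_sub_C lam).coprime_iff_not_dvd.mpr hnd)
      obtain ⟨m3, hm3⟩ := hdvd
      have hw0 : aeval (mul b) m2 b ≠ 0 := by
        intro h
        have hd := (hmem m2).mp h
        have := natDegree_le_of_dvd hd hm2monic.ne_zero
        omega
      have : mul (aeval (mul b) m2 b) (aeval (mul b) m2 b) = 0 := by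
        rw [mulv mul h_comm h_jordan,
          show (X:ℝ[X]) * m2 * m2 = m * (X * m3) by rw [← hfac, hm3]; ring]
        exact (hmem _).mpr (dvd_mul_right m _)
      exact hw0 (fr1 mul h_fr _ this)

end Main

/-- In a finite-dimensional formally real Jordan algebra `A`, the bilinear form
`⟨a, b⟩ = tr (L_{a ∘ b})`, where `L_c` is Jordan multiplication by `c`, is a
positive definite (symmetric) inner product. -/
theorem stmt_10 (A : Type*) [AddCommGroup A] [Module ℝ A] [FiniteDimensional ℝ A]
    (mul : A →ₗ[ℝ] A →ₗ[ℝ] A)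
    (h_comm : ∀ a b : A, mul a b = mul b a)
    (h_jordan : ∀ a b : A,
      mul (mul (mul a a) b) a = mul (mul a a) (mul b a))
    (h_formally_real : ∀ (k : ℕ) (s : Fin k → A),
      ∑ i, mul (s i) (s i) = 0 → ∀ i, s i = 0) :
    (∀ a b : A, LinearMap.trace ℝ A (mul (mul a b)) = LinearMap.trace ℝ A (mul (mul b a))) ∧
    (∀ a : A, a ≠ 0 → 0 < LinearMap.trace ℝ A (mul (mul a a))) := by
  constructor
  · intro a b
    rw [h_comm a b]
  · intro a ha
    have hchar := LinearMap.aeval_self_charpoly (mul a)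
    exact main_pos mul h_comm h_jordan h_formally_real ((mul a).charpoly.natDegree) a ha
      (mul a).charpoly (LinearMap.charpoly_monic _) le_rfl
      (by rw [hchar]; exact rfl)
end

section
/- Let H be a finite-dimensional irreducible complex unitary representation of a group G admitting a nonzero invariant antisymmetric bilinear form g. Then there exists an antiunitary map J : H → H commuting with the G-action and satisfying J² = −1. -/
open ComplexConjugate

/-- If a finite-dimensional irreducible complex unitary representation `H` of a group
`G` admits a nonzero invariant antisymmetric bilinear form, then there is an antiunitary
map `J : H → H` (a conjugate-linear bijection reversing the inner product) commuting
with the `G`-action and satisfying `J² = -1`. -/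
theorem stmt_14 {G : Type*} [Group G] {H : Type*} [NormedAddCommGroup H]
    [InnerProductSpace ℂ H] [FiniteDimensional ℂ H]
    (ρ : G →* (H ≃ₗ[ℂ] H))
    (h_unitary : ∀ (g : G) (v w : H), inner ℂ (ρ g v) (ρ g w) = (inner ℂ v w : ℂ))
    (h_irred : ∀ W : Submodule ℂ H,
      (∀ g : G, W.map (ρ g : H →ₗ[ℂ] H) ≤ W) → W = ⊥ ∨ W = ⊤)
    (g : H →ₗ[ℂ] H →ₗ[ℂ] ℂ) (hg_ne : g ≠ 0)
    (hg_inv : ∀ (h : G) (v w : H), g (ρ h v) (ρ h w) = g v w)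
    (hg_anti : ∀ v w : H, g v w = -g w v) :
    ∃ J : H →ₗ⋆[ℂ] H,
      (∀ v w : H, inner ℂ (J v) (J w) = (inner ℂ w v : ℂ)) ∧
      (∀ (h : G) (v : H), J (ρ h v) = ρ h (J v)) ∧
      (∀ v : H, J (J v) = -v) := by
  classical
  -- nontriviality
  have hnt : Nontrivial H := by
    by_contra h
    apply hg_ne
    have : Subsingleton H := not_nontrivial_iff_subsingleton.mp h
    ext v w
    simp [Subsingleton.elim v 0]
  -- the conjugate-linear map A with ⟪A v, w⟫ = g v w
  let A : H →ₗ⋆[ℂ] H :=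
    { toFun := fun v => (InnerProductSpace.toDual ℂ H).symm ((g v).toContinuousLinearMap)
      map_add' := by
        intro v w
        rw [map_add, map_add, map_add]
      map_smul' := by
        intro c v
        rw [map_smul, map_smul, map_smulₛₗ] }
  have hA : ∀ v w : H, (inner ℂ (A v) w : ℂ) = g v w := by
    intro v w
    simp only [A, LinearMap.coe_mk, AddHom.coe_mk, InnerProductSpace.toDual_symm_apply]
    rfl
  -- A commutes with the action
  have hAcomm : ∀ (h : G) (v : H), A (ρ h v) = ρ h (A v) := by
    intro h v
    apply ext_inner_right ℂ
    intro w
    have hw : w = ρ h ((ρ h).symm w) := ((ρ h).apply_symm_apply w).symm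
    rw [hw, hA, hg_inv, h_unitary, hA]
  -- A is injective
  have hAne : ∃ v, A v ≠ 0 := by
    by_contra h
    push_neg at h
    apply hg_ne
    ext v w
    rw [← hA, h v, inner_zero_left]
    rfl
  have hAinj : ∀ v, A v = 0 → v = 0 := by
    intro v hv
    let K : Submodule ℂ H :=
      { carrier := {v | A v = 0}
        add_mem' := by intro a b ha hb; simp only [Set.mem_setOf_eq, map_add] at *; rw [ha, hb, add_zero]
        zero_mem' := by simp [Set.mem_setOf_eq]
        smul_mem' := by intro c a ha; simp only [Set.mem_setOf_eq, map_smulₛₗ] at *; rw [ha, smul_zero] }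
    have hKinv : ∀ h : G, K.map (ρ h : H →ₗ[ℂ] H) ≤ K := by
      rintro h x ⟨y, hy, rfl⟩
      show A (ρ h y) = 0
      rw [hAcomm, show A y = 0 from hy, map_zero]
    rcases h_irred K hKinv with hK | hK
    · have : v ∈ K := hv
      rw [hK] at this
      simpa using this
    · obtain ⟨v₀, hv₀⟩ := hAne
      exact absurd (by rw [hK]; trivial : v₀ ∈ K) hv₀
  -- Schur: A² = c • id
  have hnt' : Nontrivial H := hnt
  let T : Module.End ℂ H := (A.comp A : H →ₗ[ℂ] H)
  have hT : ∀ v, T v = A (A v) := fun v => rfl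
  obtain ⟨c, hc⟩ := Module.End.exists_eigenvalue T
  have hEig : ∀ h : G, (Module.End.eigenspace T c).map (ρ h : H →ₗ[ℂ] H) ≤ Module.End.eigenspace T c := by
    rintro h x ⟨y, hy, rfl⟩
    have hy' := Module.End.mem_eigenspace_iff.mp hy
    rw [Module.End.mem_eigenspace_iff]
    show A (A ((ρ h) y)) = c • (ρ h) y
    rw [hAcomm, hAcomm, ← hT, hy', map_smul]
  have hTop : Module.End.eigenspace T c = ⊤ := by
    rcases h_irred _ hEig with h | h
    · exact absurd h hc
    · exact h
  have hc2 : ∀ v : H, A (A v) = c • v := by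
    intro v
    have : v ∈ Module.End.eigenspace T c := by rw [hTop]; trivial
    rw [Module.End.mem_eigenspace_iff] at this
    rw [← hT, this]
  -- key identity: ⟪A v, A w⟫ = - (conj c) * ⟪w, v⟫
  have hkey : ∀ v w : H, (inner ℂ (A v) (A w) : ℂ) = -(conj c) * inner ℂ w v := by
    intro v w
    have h1 : (inner ℂ (A (A w)) v : ℂ) = - inner ℂ (A v) (A w) := by
      rw [hA, hg_anti, ← hA]
    rw [hc2, inner_smul_left] at h1
    linear_combination h1
  -- c is a negative real number
  obtain ⟨v₀, hv₀⟩ := exists_ne (0 : H)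
  have hAv₀ : A v₀ ≠ 0 := fun hz => hv₀ (hAinj v₀ hz)
  have hnv : ‖v₀‖ ≠ 0 := norm_ne_zero_iff.mpr hv₀
  have hna : ‖A v₀‖ ≠ 0 := norm_ne_zero_iff.mpr hAv₀
  set cr : ℝ := -(‖A v₀‖ ^ 2 / ‖v₀‖ ^ 2) with hcr_def
  have hcrneg : cr < 0 := by
    rw [hcr_def]
    have h1 : 0 < ‖A v₀‖ ^ 2 := by positivity
    have h2 : 0 < ‖v₀‖ ^ 2 := by positivity
    have := div_pos h1 h2
    linarith
  have hconj : conj c = (cr : ℂ) := by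
    have h0 := hkey v₀ v₀
    rw [inner_self_eq_norm_sq_to_K, inner_self_eq_norm_sq_to_K] at h0
    have hnvC : ((‖v₀‖ : ℂ)) ≠ 0 := by exact_mod_cast hnv
    rw [hcr_def]
    push_cast
    field_simp at h0 ⊢
    linear_combination h0
  have hcC : c = (cr : ℂ) := by
    have := congrArg conj hconj
    rwa [Complex.conj_conj, Complex.conj_ofReal] at this
  set r : ℝ := Real.sqrt (-cr) with hr_def
  have hrpos : 0 < r := Real.sqrt_pos.mpr (by linarith)
  have hr2 : r ^ 2 = -cr := Real.sq_sqrt (by linarith)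
  -- the antiunitary J
  refine ⟨((r⁻¹ : ℝ) : ℂ) • A, ?_, ?_, ?_⟩
  · intro v w
    rw [LinearMap.smul_apply, LinearMap.smul_apply, inner_smul_left, inner_smul_right, hkey]
    have hs : conj (((r⁻¹ : ℝ) : ℂ)) * (((r⁻¹ : ℝ) : ℂ) * -(conj c)) = 1 := by
      rw [Complex.conj_ofReal, hconj]
      have : (cr : ℂ) = -(((r ^ 2 : ℝ)) : ℂ) := by
        rw [hr2]; push_cast; ring
      rw [this]
      have hrC : (r : ℂ) ≠ 0 := by exact_mod_cast hrpos.ne'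
      push_cast
      field_simp
    calc conj (((r⁻¹ : ℝ) : ℂ)) * (((r⁻¹ : ℝ) : ℂ) * (-(conj c) * inner ℂ w v))
        = (conj (((r⁻¹ : ℝ) : ℂ)) * (((r⁻¹ : ℝ) : ℂ) * -(conj c))) * inner ℂ w v := by ring
      _ = inner ℂ w v := by rw [hs, one_mul]
  · intro h v
    rw [LinearMap.smul_apply, LinearMap.smul_apply, hAcomm, map_smul]
  · intro v
    rw [LinearMap.smul_apply, LinearMap.smul_apply, map_smulₛₗ, hc2, Complex.conj_ofReal,
      smul_smul, smul_smul, hcC]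
    have hs : ((r⁻¹ : ℝ) : ℂ) * ((r⁻¹ : ℝ) : ℂ) * (cr : ℂ) = -1 := by
      have : (cr : ℂ) = -(((r ^ 2 : ℝ)) : ℂ) := by rw [hr2]; push_cast; ring
      rw [this]
      have hrC : (r : ℂ) ≠ 0 := by exact_mod_cast hrpos.ne'
      push_cast
      field_simp
    rw [hs, neg_one_smul]
end
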